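/- A string assignment ν is a solution of the word equation y₁…yₙ = z₁…zₘ if and only if every atom equivalence class agrees in ν, where lengths are fixed by ν (ℓ_x = |ν(x)| for each variable x) and the total lengths of both sides coincide. -/

import Mathlib

/-- The atom (variable occurrence, index within it) lying at a given position
of a term: `atomOf ℓ t p = some (x, i)` iff the `p`-th letter (0-based) of any
string matching the term `t` (with variable lengths given by `ℓ`) lies at
index `i` inside an occurrence of variable `x`. -/
def atomOf {X : Type*} (ℓ : X → ℕ) : List X → ℕ → Option (X × ℕ)
  | [], _ => none
  | x :: xs, p => if p < ℓ x then some (x, p) else atomOf ℓ xs (p - ℓ x)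

/-- Two atoms are related if they are the left and right atoms of a common
position of the equation `ys = zs`. The equivalence `∼` on atoms is the
equivalence generated by this relation. -/
def AtomRel {X : Type*} (ℓ : X → ℕ) (ys zs : List X) (a b : X × ℕ) : Prop :=
  ∃ p, atomOf ℓ ys p = some a ∧ atomOf ℓ zs p = some b

lemma atomOf_lt {X : Type*} (ℓ : X → ℕ) : ∀ (t : List X) (p : ℕ) (x : X) (i : ℕ),
    atomOf ℓ t p = some (x, i) → i < ℓ x := by
  intro t
  induction t with
  | nil => intro p x i h; simp [atomOf] at h
  | cons y t ih =>
    intro p x i h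
    simp only [atomOf] at h
    split at h
    · rcases h with ⟨rfl, rfl⟩
      assumption
    · exact ih _ _ _ h

lemma atomOf_isSome {X : Type*} (ℓ : X → ℕ) : ∀ (t : List X) (p : ℕ),
    (atomOf ℓ t p).isSome ↔ p < (t.map ℓ).sum := by
  intro t
  induction t with
  | nil => intro p; simp [atomOf]
  | cons y t ih =>
    intro p
    simp only [atomOf, List.map_cons, List.sum_cons]
    split
    · simp; omega
    · rw [ih]; omega

lemma flatten_get? {X Γ : Type*} (ℓ : X → ℕ) (ν : X → List Γ)
    (hlen : ∀ x, (ν x).length = ℓ x) : ∀ (t : List X) (p : ℕ),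
    ((t.map ν).flatten)[p]? = (atomOf ℓ t p).bind (fun a => (ν a.1)[a.2]?) := by
  intro t
  induction t with
  | nil => intro p; simp [atomOf]
  | cons y t ih =>
    intro p
    simp only [List.map_cons, List.flatten_cons, atomOf]
    split
    · rw [List.getElem?_append_left]
      · simp
      · rw [hlen]; assumption
    · rw [List.getElem?_append_right, hlen, ih]
      rw [hlen]; omega

/-- A string assignment `ν` (with lengths `ℓ_x = |ν x|` and matching total
lengths) is a solution of the word equation `y₁…yₙ = z₁…zₘ` iff every atom
equivalence class agrees in `ν`, i.e. for every atom all atoms of its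
`∼`-class carry one common letter. -/
theorem solution_iff_all_atom_classes_agree {X Γ : Type*}
    (ℓ : X → ℕ) (ys zs : List X) (ν : X → List Γ)
    (hlen : ∀ x, (ν x).length = ℓ x)
    (htot : (ys.map ℓ).sum = (zs.map ℓ).sum) :
    (ys.map ν).flatten = (zs.map ν).flatten ↔
      ∀ a : X × ℕ, a.2 < ℓ a.1 →
        ∃ c : Γ, ∀ b : X × ℕ, Relation.EqvGen (AtomRel ℓ ys zs) a b →
          (ν b.1)[b.2]? = some c := by
  constructor
  · intro hsol a ha
    refine ⟨(ν a.1).get ⟨a.2, by rw [hlen]; exact ha⟩, ?_⟩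
    have hval : ∀ a b, Relation.EqvGen (AtomRel ℓ ys zs) a b →
        (ν b.1)[b.2]? = (ν a.1)[a.2]? := by
      intro a b hb
      induction hb with
      | rel x y h =>
        obtain ⟨p, h1, h2⟩ := h
        have := (flatten_get? ℓ ν hlen ys p).symm.trans
          (hsol ▸ flatten_get? ℓ ν hlen zs p)
        rw [h1, h2] at this
        exact this.symm
      | refl => rfl
      | symm x y _ ih =>
        exact ih.symm
      | trans x y z _ _ ih1 ih2 =>
        exact ih2.trans ih1
    intro b hb
    rw [hval a b hb, List.getElem?_eq_getElem (by rw [hlen]; exact ha), List.get_eq_getElem]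
  · intro hagree
    apply List.ext_getElem?
    intro p
    rw [flatten_get? ℓ ν hlen, flatten_get? ℓ ν hlen]
    by_cases hp : p < (ys.map ℓ).sum
    · obtain ⟨a, ha⟩ := Option.isSome_iff_exists.mp
        (((atomOf_isSome ℓ ys p)).mpr hp)
      obtain ⟨b, hb⟩ := Option.isSome_iff_exists.mp
        (((atomOf_isSome ℓ zs p)).mpr (htot ▸ hp))
      obtain ⟨c, hc⟩ := hagree a (atomOf_lt ℓ ys p a.1 a.2 (by rw [ha]))
      rw [ha, hb]
      show (ν a.1)[a.2]? = (ν b.1)[b.2]?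
      rw [hc a (Relation.EqvGen.refl a),
        hc b (Relation.EqvGen.rel a b ⟨p, by rw [ha], hb⟩)]
    · have h1 : atomOf ℓ ys p = none :=
        Option.not_isSome_iff_eq_none.mp (by rw [atomOf_isSome]; omega)
      have h2 : atomOf ℓ zs p = none :=
        Option.not_isSome_iff_eq_none.mp (by rw [atomOf_isSome]; omega)
      rw [h1, h2]
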